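/- Let b ∈ ℝ, b ≠ 0, and for m ∈ ℕ let G_m : ℝ → ℝ with G_m ∈ L¹(ℝ), x·G_m(x) ∈ L¹(ℝ), G_m → G and x G_m → x G in L¹(ℝ) as m → ∞, and assume ∫_ℝ G_m(x) dx = 0 for all m ∈ ℕ. Then ∫_ℝ G(x) dx = 0, and Ĝ_m(p)/(p⁴ − ibp) → Ĝ(p)/(p⁴ − ibp) and p⁴Ĝ_m(p)/(p⁴ − ibp) → p⁴Ĝ(p)/(p⁴ − ibp) in L^∞(ℝ) as m → ∞; in particular ‖Ĝ_m(p)/(p⁴ − ibp) − Ĝ(p)/(p⁴ − ibp)‖_{L^∞(ℝ)} ≤ ‖xG_m(x) − xG(x)‖_{L¹(ℝ)}/(√(2π)|b|). -/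

import Mathlib

open MeasureTheory Real Filter Topology

/-- The Fourier transform `Ĝ(p) = (1/√(2π)) ∫ G(x) e^{-ipx} dx`. -/
noncomputable def fourierTransform (G : ℝ → ℝ) (p : ℝ) : ℂ :=
  (1 / Real.sqrt (2 * Real.pi)) * ∫ x : ℝ, (G x : ℂ) * Complex.exp (-Complex.I * p * x)

/-- The symbol `p⁴ - a - i b p` of the operator `d⁴/dx⁴ - b d/dx - a`. -/
noncomputable def denom (a b p : ℝ) : ℂ := (p : ℂ) ^ 4 - (a : ℂ) - Complex.I * b * p

lemma norm_exp_mul_I_sub_one_le (θ : ℝ) : ‖Complex.exp (θ * Complex.I) - 1‖ ≤ |θ| := by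
  rw [← Real.sqrt_sq_eq_abs, Complex.norm_def]
  apply Real.sqrt_le_sqrt
  have h1 : Complex.normSq (Complex.exp (θ * Complex.I) - 1) = 2 - 2 * Real.cos θ := by
    simp [Complex.normSq_apply, Complex.sub_re, Complex.sub_im,
      Complex.exp_ofReal_mul_I_re, Complex.exp_ofReal_mul_I_im]
    nlinarith [Real.sin_sq_add_cos_sq θ]
  have h2 := Real.one_sub_sq_div_two_le_cos (x := θ)
  nlinarith

lemma exp_eq' (p x : ℝ) : Complex.exp (-Complex.I * p * x) = Complex.exp ((-(p*x) : ℝ) * Complex.I) := by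
  push_cast; ring_nf

lemma norm_exp_eq_one (p x : ℝ) : ‖Complex.exp (-Complex.I * p * x)‖ = 1 := by
  rw [Complex.norm_exp]; simp

lemma integrable_mul_exp {f : ℝ → ℝ} (hf : Integrable f (volume : Measure ℝ)) (p : ℝ) :
    Integrable (fun x => (f x : ℂ) * Complex.exp (-Complex.I * p * x)) (volume : Measure ℝ) := by
  apply Integrable.mono' hf.norm
  · exact (Complex.measurable_ofReal.comp_aemeasurable
      hf.aestronglyMeasurable.aemeasurable).aestronglyMeasurable.mul
      ((Complex.continuous_exp.comp (by continuity)).aestronglyMeasurable)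
  · filter_upwards with x
    rw [norm_mul, norm_exp_eq_one, mul_one, Complex.norm_real]

lemma denom_im (b p : ℝ) : (denom 0 b p).im = -(b * p) := by
  simp [denom, ← Complex.ofReal_pow]

lemma denom_re (b p : ℝ) : (denom 0 b p).re = p ^ 4 := by
  simp [denom, ← Complex.ofReal_pow]

-- key bound 1: ‖F f p‖ ≤ (1/√2π) ∫ |f|
lemma ft_norm_le {f : ℝ → ℝ} (hf : Integrable f (volume : Measure ℝ)) (p : ℝ) :
    ‖fourierTransform f p‖ ≤ (1 / Real.sqrt (2 * Real.pi)) * ∫ x : ℝ, |f x| := by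
  rw [fourierTransform, norm_mul]
  have h1 : ‖(1 / (Real.sqrt (2 * Real.pi) : ℂ))‖ = 1 / Real.sqrt (2 * Real.pi) := by
    rw [norm_div, norm_one, Complex.norm_real, Real.norm_eq_abs, abs_of_nonneg (by positivity)]
  rw [h1]
  refine mul_le_mul_of_nonneg_left ?_ (by positivity)
  calc ‖∫ x : ℝ, (f x : ℂ) * Complex.exp (-Complex.I * p * x)‖
      ≤ ∫ x : ℝ, ‖(f x : ℂ) * Complex.exp (-Complex.I * p * x)‖ :=
        norm_integral_le_integral_norm _
    _ = ∫ x : ℝ, |f x| := by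
        congr 1; funext x
        rw [norm_mul, norm_exp_eq_one, mul_one, Complex.norm_real, Real.norm_eq_abs]

-- key bound 2
lemma ft_norm_le' {f : ℝ → ℝ} (hf : Integrable f (volume : Measure ℝ))
    (hxf : Integrable (fun x => x * f x) (volume : Measure ℝ))
    (hzero : (∫ x : ℝ, f x) = 0) (p : ℝ) :
    ‖fourierTransform f p‖ ≤ (1 / Real.sqrt (2 * Real.pi)) * (|p| * ∫ x : ℝ, |x * f x|) := by
  rw [fourierTransform, norm_mul]
  have h1 : ‖(1 / (Real.sqrt (2 * Real.pi) : ℂ))‖ = 1 / Real.sqrt (2 * Real.pi) := by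
    rw [norm_div, norm_one, Complex.norm_real, Real.norm_eq_abs, abs_of_nonneg (by positivity)]
  rw [h1]
  refine mul_le_mul_of_nonneg_left ?_ (by positivity)
  have key : (∫ x : ℝ, (f x : ℂ) * Complex.exp (-Complex.I * p * x))
      = ∫ x : ℝ, (f x : ℂ) * (Complex.exp (-Complex.I * p * x) - 1) := by
    simp only [mul_sub, mul_one]
    have h2 := integral_sub (integrable_mul_exp hf p) hf.ofReal
    rw [integral_ofReal, hzero] at h2
    simpa using h2.symm
  rw [key]
  have : ∀ x : ℝ, ‖(f x : ℂ) * (Complex.exp (-Complex.I * p * x) - 1)‖ ≤ |p| * |x * f x| := by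
    intro x
    rw [norm_mul, Complex.norm_real, Real.norm_eq_abs]
    calc |f x| * ‖Complex.exp (-Complex.I * p * x) - 1‖
        ≤ |f x| * |(-(p*x))| := by
          gcongr
          rw [exp_eq']
          exact norm_exp_mul_I_sub_one_le _
      _ = |p| * |x * f x| := by rw [abs_neg, abs_mul, abs_mul]; ring
  calc ‖∫ x : ℝ, (f x : ℂ) * (Complex.exp (-Complex.I * p * x) - 1)‖
      ≤ ∫ x : ℝ, |p| * |x * f x| :=
        norm_integral_le_of_norm_le (hxf.abs.const_mul _) (Filter.Eventually.of_forall this)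
    _ = |p| * ∫ x : ℝ, |x * f x| := by
        simp_rw [← smul_eq_mul, integral_smul]

lemma norm_denom_ge_im (b p : ℝ) : |b| * |p| ≤ ‖denom 0 b p‖ := by
  have h := Complex.abs_im_le_norm (denom 0 b p)
  rw [denom_im, abs_neg, abs_mul] at h
  exact h

lemma norm_denom_ge_re (b p : ℝ) : |p| ^ 4 ≤ ‖denom 0 b p‖ := by
  have h := Complex.abs_re_le_norm (denom 0 b p)
  rw [denom_re, abs_pow] at h
  exact h

lemma ft_zero {f : ℝ → ℝ} (hzero : (∫ x : ℝ, f x) = 0) : fourierTransform f 0 = 0 := by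
  rw [fourierTransform]
  have : ∀ x : ℝ, (f x : ℂ) * Complex.exp (-Complex.I * (0:ℝ) * x) = (f x : ℂ) := by
    intro x; simp
  simp only [this]
  rw [show (∫ x : ℝ, ((f x : ℝ) : ℂ)) = ((∫ x : ℝ, f x : ℝ) : ℂ) from integral_ofReal, hzero]
  simp

lemma quotient_boundA {f : ℝ → ℝ} (hf : Integrable f (volume : Measure ℝ))
    (hxf : Integrable (fun x => x * f x) (volume : Measure ℝ))
    (hzero : (∫ x : ℝ, f x) = 0) {b : ℝ} (hb : b ≠ 0) (p : ℝ) :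
    ‖fourierTransform f p / denom 0 b p‖ ≤
      (∫ x : ℝ, |x * f x|) / (Real.sqrt (2 * Real.pi) * |b|) := by
  have hA : 0 ≤ ∫ x : ℝ, |x * f x| := integral_nonneg fun x => abs_nonneg _
  have hsq : (0:ℝ) < Real.sqrt (2 * Real.pi) := Real.sqrt_pos.2 (by positivity)
  rcases eq_or_ne p 0 with hp | hp
  · rw [hp, ft_zero hzero, zero_div, norm_zero]
    positivity
  · have hbp : (0:ℝ) < |b| * |p| := by positivity
    rw [norm_div]
    calc ‖fourierTransform f p‖ / ‖denom 0 b p‖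
        ≤ ((1 / Real.sqrt (2 * Real.pi)) * (|p| * ∫ x : ℝ, |x * f x|)) / (|b| * |p|) :=
          div_le_div₀ (by positivity) (ft_norm_le' hf hxf hzero p) hbp (norm_denom_ge_im b p)
      _ = (∫ x : ℝ, |x * f x|) / (Real.sqrt (2 * Real.pi) * |b|) := by
          field_simp [abs_ne_zero.2 hp]

lemma quotient_boundB {f : ℝ → ℝ} (hf : Integrable f (volume : Measure ℝ)) {b : ℝ} (p : ℝ) :
    ‖(p : ℂ) ^ 4 * fourierTransform f p / denom 0 b p‖ ≤
      (1 / Real.sqrt (2 * Real.pi)) * ∫ x : ℝ, |f x| := by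
  have hC : (0:ℝ) ≤ (1 / Real.sqrt (2 * Real.pi)) * ∫ x : ℝ, |f x| := by
    have : 0 ≤ ∫ x : ℝ, |f x| := integral_nonneg fun x => abs_nonneg _
    positivity
  rcases eq_or_ne p 0 with hp | hp
  · simpa [hp] using hC
  · have hp4 : (0:ℝ) < |p| ^ 4 := by positivity
    rw [norm_div, norm_mul]
    have hnp : ‖(p:ℂ)^4‖ = |p| ^ 4 := by
      rw [norm_pow, Complex.norm_real, Real.norm_eq_abs]
    rw [hnp]
    calc |p| ^ 4 * ‖fourierTransform f p‖ / ‖denom 0 b p‖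
        ≤ (|p| ^ 4 * ((1 / Real.sqrt (2 * Real.pi)) * ∫ x : ℝ, |f x|)) / (|p| ^ 4) := by
          apply div_le_div₀ (by positivity) _ hp4 (norm_denom_ge_re b p)
          exact mul_le_mul_of_nonneg_left (ft_norm_le hf p) (le_of_lt hp4)
      _ = (1 / Real.sqrt (2 * Real.pi)) * ∫ x : ℝ, |f x| := by
          field_simp

lemma ft_sub {f g : ℝ → ℝ} (hf : Integrable f (volume : Measure ℝ))
    (hg : Integrable g (volume : Measure ℝ)) (p : ℝ) :
    fourierTransform (fun x => f x - g x) p = fourierTransform f p - fourierTransform g p := by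
  rw [fourierTransform, fourierTransform, fourierTransform, ← mul_sub]
  congr 1
  rw [← integral_sub (integrable_mul_exp hf p) (integrable_mul_exp hg p)]
  congr 1; funext x
  push_cast; ring

/-- Lemma A2, case b): for `a = 0`, `b ≠ 0`, `G_m, xG_m ∈ L¹(ℝ)` with `G_m → G` and
`xG_m → xG` in `L¹(ℝ)` and `∫ G_m = 0`, one has `∫ G = 0`, the quotients converge in
`L^∞(ℝ)`, and the explicit bound
`sup_p ‖Ĝ_m/(p⁴-ibp) - Ĝ/(p⁴-ibp)‖ ≤ ‖xG_m - xG‖_{L¹}/(√(2π)|b|)` holds. -/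
theorem quotient_convergence_zero_a
    (b : ℝ) (hb : b ≠ 0)
    (G : ℝ → ℝ) (Gm : ℕ → ℝ → ℝ)
    (hGm : ∀ m : ℕ, Integrable (Gm m) (volume : Measure ℝ))
    (hG : Integrable G (volume : Measure ℝ))
    (hxGm : ∀ m : ℕ, Integrable (fun x => x * Gm m x) (volume : Measure ℝ))
    (hxG : Integrable (fun x => x * G x) (volume : Measure ℝ))
    (hconv : Tendsto (fun m : ℕ => ∫ x : ℝ, |Gm m x - G x|) atTop (𝓝 0))
    (hxconv : Tendsto (fun m : ℕ => ∫ x : ℝ, |x * Gm m x - x * G x|) atTop (𝓝 0))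
    (horth : ∀ m : ℕ, (∫ x : ℝ, Gm m x) = 0) :
    (∫ x : ℝ, G x) = 0 ∧
    Tendsto (fun m : ℕ =>
        ⨆ p : ℝ, ‖fourierTransform (Gm m) p / denom 0 b p -
          fourierTransform G p / denom 0 b p‖) atTop (𝓝 0) ∧
    Tendsto (fun m : ℕ =>
        ⨆ p : ℝ, ‖(p : ℂ) ^ 4 * fourierTransform (Gm m) p / denom 0 b p -
          (p : ℂ) ^ 4 * fourierTransform G p / denom 0 b p‖) atTop (𝓝 0) ∧
    ∀ m : ℕ,
      (⨆ p : ℝ, ‖fourierTransform (Gm m) p / denom 0 b p -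
        fourierTransform G p / denom 0 b p‖) ≤
      (∫ x : ℝ, |x * Gm m x - x * G x|) / (Real.sqrt (2 * Real.pi) * |b|) := by
  -- Part 1: ∫ G = 0
  have hGint : (∫ x : ℝ, G x) = 0 := by
    have h1 : Tendsto (fun m : ℕ => ∫ x : ℝ, Gm m x) atTop (𝓝 (∫ x : ℝ, G x)) := by
      rw [tendsto_iff_norm_sub_tendsto_zero]
      apply squeeze_zero (fun m => norm_nonneg _) _ hconv
      intro m
      rw [← integral_sub (hGm m) hG]
      calc ‖∫ x : ℝ, (Gm m x - G x)‖ ≤ ∫ x : ℝ, ‖Gm m x - G x‖ :=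
            norm_integral_le_integral_norm _
        _ = ∫ x : ℝ, |Gm m x - G x| := by simp [Real.norm_eq_abs]
    have h2 : (fun m : ℕ => ∫ x : ℝ, Gm m x) = fun _ => (0:ℝ) := funext horth
    rw [h2] at h1
    exact (tendsto_nhds_unique tendsto_const_nhds h1).symm
  -- setup per m
  set Δ : ℕ → ℝ → ℝ := fun m x => Gm m x - G x with hΔdef
  have hΔ : ∀ m, Integrable (Δ m) (volume : Measure ℝ) := fun m => (hGm m).sub hG
  have hxΔ : ∀ m, Integrable (fun x => x * Δ m x) (volume : Measure ℝ) := by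
    intro m
    have : (fun x => x * Δ m x) = fun x => x * Gm m x - x * G x := by
      funext x; simp [hΔdef]; ring
    rw [this]; exact (hxGm m).sub hxG
  have hΔ0 : ∀ m, (∫ x : ℝ, Δ m x) = 0 := by
    intro m
    rw [hΔdef]
    simp only
    rw [integral_sub (hGm m) hG, horth m, hGint, sub_zero]
  have hAeq : ∀ m, (∫ x : ℝ, |x * Δ m x|) = ∫ x : ℝ, |x * Gm m x - x * G x| := by
    intro m; congr 1; funext x; rw [hΔdef]; simp only; rw [mul_sub]
  have hdiff : ∀ m p, fourierTransform (Gm m) p / denom 0 b p -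
      fourierTransform G p / denom 0 b p = fourierTransform (Δ m) p / denom 0 b p := by
    intro m p
    rw [div_sub_div_same, ← ft_sub (hGm m) hG]
  have hdiff4 : ∀ (m : ℕ) (p : ℝ), (p : ℂ) ^ 4 * fourierTransform (Gm m) p / denom 0 b p -
      (p : ℂ) ^ 4 * fourierTransform G p / denom 0 b p
      = (p : ℂ) ^ 4 * fourierTransform (Δ m) p / denom 0 b p := by
    intro m p
    rw [div_sub_div_same, ← mul_sub, ← ft_sub (hGm m) hG]
  -- Part 4
  have part4 : ∀ m : ℕ,
      (⨆ p : ℝ, ‖fourierTransform (Gm m) p / denom 0 b p -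
        fourierTransform G p / denom 0 b p‖) ≤
      (∫ x : ℝ, |x * Gm m x - x * G x|) / (Real.sqrt (2 * Real.pi) * |b|) := by
    intro m
    have hrhs : 0 ≤ (∫ x : ℝ, |x * Gm m x - x * G x|) / (Real.sqrt (2 * Real.pi) * |b|) := by
      have : 0 ≤ ∫ x : ℝ, |x * Gm m x - x * G x| := integral_nonneg fun x => abs_nonneg _
      have hs : (0:ℝ) < Real.sqrt (2 * Real.pi) := Real.sqrt_pos.2 (by positivity)
      positivity
    apply Real.iSup_le _ hrhs
    intro p
    rw [hdiff m p, ← hAeq m]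
    exact quotient_boundA (hΔ m) (hxΔ m) (hΔ0 m) hb p
  -- Part 2
  have part2 : Tendsto (fun m : ℕ =>
      ⨆ p : ℝ, ‖fourierTransform (Gm m) p / denom 0 b p -
        fourierTransform G p / denom 0 b p‖) atTop (𝓝 0) := by
    apply squeeze_zero (fun m => Real.iSup_nonneg fun p => norm_nonneg _) part4
    simpa using hxconv.div_const (Real.sqrt (2 * Real.pi) * |b|)
  -- Part 3
  have part3 : Tendsto (fun m : ℕ =>
      ⨆ p : ℝ, ‖(p : ℂ) ^ 4 * fourierTransform (Gm m) p / denom 0 b p -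
        (p : ℂ) ^ 4 * fourierTransform G p / denom 0 b p‖) atTop (𝓝 0) := by
    have hbd : ∀ m : ℕ,
        (⨆ p : ℝ, ‖(p : ℂ) ^ 4 * fourierTransform (Gm m) p / denom 0 b p -
          (p : ℂ) ^ 4 * fourierTransform G p / denom 0 b p‖) ≤
        (1 / Real.sqrt (2 * Real.pi)) * ∫ x : ℝ, |Gm m x - G x| := by
      intro m
      have hrhs : 0 ≤ (1 / Real.sqrt (2 * Real.pi)) * ∫ x : ℝ, |Gm m x - G x| := by
        have : 0 ≤ ∫ x : ℝ, |Gm m x - G x| := integral_nonneg fun x => abs_nonneg _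
        positivity
      apply Real.iSup_le _ hrhs
      intro p
      rw [hdiff4 m p]
      exact quotient_boundB (hΔ m) p
    apply squeeze_zero (fun m => Real.iSup_nonneg fun p => norm_nonneg _) hbd
    simpa using hconv.const_mul (1 / Real.sqrt (2 * Real.pi))
  exact ⟨hGint, part2, part3, part4⟩
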